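/- Let Δ : I → ℝ be real analytic on an interval I, not identically zero, with Δ ≥ 0, and suppose Δ vanishes at t′ ∈ I to order exactly 2k with k ≥ 1. Then the function Δ̃(t) := Δ(t) + (Δ′(t))²/Δ(t) (defined where Δ(t) > 0 and extended by its limit) vanishes at t′ to order exactly 2k − 2. -/

import Mathlib

open Filter

/-- If `Δ ≥ 0` is real analytic, vanishing at `t′` to order exactly `2k` (`k ≥ 1`),
then `Δ̃ = Δ + (Δ′)²/Δ` vanishes at `t′` to order exactly `2k - 2`, in the sense
that `Δ̃(t)/(t-t′)^{2k-2}` tends to a positive constant as `t → t′`, `t ≠ t′`. -/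
theorem stmt_6 (Δ : ℝ → ℝ) (t' : ℝ) (k : ℕ) (hk : 1 ≤ k)
    (han : AnalyticAt ℝ Δ t') (hnn : ∀ t, 0 ≤ Δ t)
    (hvan : ∀ j < 2 * k, iteratedDeriv j Δ t' = 0)
    (hne : iteratedDeriv (2 * k) Δ t' ≠ 0)
    (Δtilde : ℝ → ℝ)
    (hΔt : ∀ t, Δtilde t = Δ t + (deriv Δ t) ^ 2 / Δ t) :
    ∃ c : ℝ, 0 < c ∧
      Tendsto (fun t => Δtilde t / (t - t') ^ (2 * k - 2)) (nhdsWithin t' {t'}ᶜ) (nhds c) := by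
  classical
  obtain ⟨p, hp⟩ := id han
  obtain ⟨r, hr⟩ := id hp
  -- Taylor coefficients in terms of iterated derivatives
  have hcoeff : ∀ n : ℕ, iteratedDeriv n Δ t' = n.factorial • p.coeff n := by
    intro n
    rw [iteratedDeriv_eq_iteratedFDeriv, ← hr.factorial_smul (1 : ℝ) n]
    rfl
  have h2k : p.coeff (2 * k) ≠ 0 := by
    intro h
    apply hne
    rw [hcoeff, h, smul_zero]
  have hpne : p ≠ 0 := by
    intro h
    apply h2k
    simp [h, FormalMultilinearSeries.coeff]
  have hcz : ∀ j < 2 * k, p j = 0 := by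
    intro j hj
    have h1 := hvan j hj
    rw [hcoeff, nsmul_eq_mul] at h1
    rcases mul_eq_zero.mp h1 with h | h
    · exact absurd h (by exact_mod_cast j.factorial_ne_zero)
    · rwa [FormalMultilinearSeries.coeff_eq_zero] at h
  have hord : p.order = 2 * k := by
    refine le_antisymm ?_ ?_
    · by_contra h
      exact h2k (by
        rw [FormalMultilinearSeries.coeff_eq_zero]
        exact p.apply_eq_zero_of_lt_order (not_le.mp h))
    · by_contra h
      exact p.apply_order_ne_zero hpne (hcz _ (not_le.mp h))
  -- factorization Δ = (t - t')^(2k) * g with g analytic, g t' ≠ 0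
  set g := (Function.swap dslope t')^[2 * k] Δ with hg_def
  have hg_an : AnalyticAt ℝ g t' :=
    ⟨_, hp.has_fpower_series_iterate_dslope_fslope (2 * k)⟩
  have hg_ne : g t' ≠ 0 := by
    have := hp.iterate_dslope_fslope_ne_zero hpne
    rwa [hord] at this
  have heq : ∀ᶠ t in nhds t', Δ t = (t - t') ^ (2 * k) * g t := by
    have := hp.eq_pow_order_mul_iterate_dslope
    rw [hord] at this
    exact Filter.Eventually.of_forall (by simpa [smul_eq_mul] using this)
  -- g t' > 0
  have hg_nonneg : 0 ≤ g t' := by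
    have hcont : Tendsto g (nhdsWithin t' {t'}ᶜ) (nhds (g t')) :=
      hg_an.continuousAt.continuousWithinAt.tendsto
    refine ge_of_tendsto hcont ?_
    filter_upwards [eventually_nhdsWithin_of_eventually_nhds heq, self_mem_nhdsWithin]
      with t ht hmem
    have hsub : t - t' ≠ 0 := sub_ne_zero.mpr hmem
    have hpow : 0 < (t - t') ^ (2 * k) := (even_two_mul k).pow_pos hsub
    have h0 := hnn t
    rw [ht] at h0
    exact le_of_not_gt fun hlt => absurd h0 (not_le.mpr (mul_neg_of_pos_of_neg hpow hlt))
  have hg_pos : 0 < g t' := hg_nonneg.lt_of_ne (Ne.symm hg_ne)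
  -- derivative of Δ near t'
  have hg_diff : ∀ᶠ t in nhds t', DifferentiableAt ℝ g t := by
    filter_upwards [hg_an.eventually_analyticAt] with t ht using ht.differentiableAt
  have hEq : Δ =ᶠ[nhds t'] fun t => (t - t') ^ (2 * k) * g t := heq
  have hderiv : ∀ᶠ t in nhds t',
      deriv Δ t = (2 * k : ℝ) * (t - t') ^ (2 * k - 1) * g t
        + (t - t') ^ (2 * k) * deriv g t := by
    filter_upwards [hEq.deriv, hg_diff] with t ht hdt
    rw [ht]
    have h1 : HasDerivAt (fun s => (s - t') ^ (2 * k))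
        ((2 * k : ℝ) * (t - t') ^ (2 * k - 1)) t := by
      simpa using ((hasDerivAt_id t).sub_const t').fun_pow (2 * k)
    rw [(h1.fun_mul hdt.hasDerivAt).deriv]
  have hgne : ∀ᶠ t in nhds t', g t ≠ 0 := hg_an.continuousAt.eventually_ne hg_ne
  -- the limit function
  set F : ℝ → ℝ := fun t =>
    (t - t') ^ 2 * g t + ((2 * k : ℝ) * g t + (t - t') * deriv g t) ^ 2 / g t with hF_def
  have hFcont : ContinuousAt F t' := by
    have hc1 : ContinuousAt g t' := hg_an.continuousAt
    have hc2 : ContinuousAt (deriv g) t' := by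
      obtain ⟨s, hs_mem, hs⟩ := hg_an.eventually_analyticAt.exists_mem
      have hOn : AnalyticOnNhd ℝ g (interior s) := fun z hz => hs z (interior_subset hz)
      exact (hOn.deriv t' (mem_interior_iff_mem_nhds.mpr hs_mem)).continuousAt
    exact (((continuousAt_id.sub continuousAt_const).pow 2).mul hc1).add
      ((((continuousAt_const.mul hc1).add
        ((continuousAt_id.sub continuousAt_const).mul hc2)).pow 2).div hc1 hg_ne)
  have hFval : F t' = ((2 * k : ℝ) * g t') ^ 2 / g t' := by
    simp [hF_def]
  refine ⟨((2 * k : ℝ) * g t') ^ 2 / g t', ?_, ?_⟩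
  · apply div_pos _ hg_pos
    have hk' : (1 : ℝ) ≤ (k : ℝ) := by exact_mod_cast hk
    have : (0 : ℝ) < (2 * k : ℝ) * g t' := by nlinarith
    positivity
  · have hFt : Tendsto F (nhdsWithin t' {t'}ᶜ) (nhds (((2 * k : ℝ) * g t') ^ 2 / g t')) := by
      rw [← hFval]
      exact hFcont.continuousWithinAt.tendsto
    refine hFt.congr' ?_
    obtain ⟨j, hj⟩ : ∃ j, 2 * k = j + 2 := ⟨2 * k - 2, by omega⟩
    have hj2 : 2 * k - 2 = j := by omega
    have hj1 : 2 * k - 1 = j + 1 := by omega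
    filter_upwards [eventually_nhdsWithin_of_eventually_nhds heq,
      eventually_nhdsWithin_of_eventually_nhds hderiv,
      eventually_nhdsWithin_of_eventually_nhds hgne, self_mem_nhdsWithin]
      with t ht hd hg0 hmem
    have hu : t - t' ≠ 0 := sub_ne_zero.mpr hmem
    rw [hΔt t, ht, hd, hj]
    have e1 : j + 2 - 1 = j + 1 := rfl
    have e2 : j + 2 - 2 = j := rfl
    rw [e1, e2]
    have hb : 2 * (k : ℝ) * (t - t') ^ (j + 1) * g t + (t - t') ^ (j + 2) * deriv g t
        = (t - t') ^ (j + 1) * (2 * (k : ℝ) * g t + (t - t') * deriv g t) := by ring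
    rw [hb, mul_pow]
    have h1 : ((t - t') ^ (j + 1)) ^ 2 = (t - t') ^ (j + 2) * (t - t') ^ j := by ring
    rw [h1, mul_assoc, mul_div_mul_left _ _ (pow_ne_zero _ hu)]
    have h2 : (t - t') ^ (j + 2) * g t = (t - t') ^ j * ((t - t') ^ 2 * g t) := by ring
    rw [h2, mul_div_assoc, add_div, mul_div_cancel_left₀ _ (pow_ne_zero _ hu),
      mul_div_cancel_left₀ _ (pow_ne_zero _ hu)]
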